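/- Let $e, g_\infty, m, h_1, h_2 > 0$ satisfy $0 < g_\infty < m$ and $h_1^2 < \frac{16}{3} h_2(m^2 - g_\infty^2)$. Let $f, g : (0,\infty) \to \mathbb{R}$ with $0 \leq g \leq g_\infty$ and define $\bar{g}(r) = g_\infty(1 - e^{-r})$. If $J_f(g) \leq J_f(\bar{g})$ where $J_f(g) = \frac{1}{2}\int_0^\infty \left(\frac{1}{e^2}(g')^2 + g^2 f^2\right) r^2\, dr$, then $I(f,g) \geq \frac{1}{2}\int_0^\infty \left((f')^2 + c f^2\right) r^2\, dr - \frac{g_\infty^2}{e^2}$, where $I(f,g) = K(f) - J_f(g)$, $K(f) = \frac{1}{2}\int_0^\infty \left((f')^2 + m^2 f^2 - \frac{h_1}{4} f^4 + \frac{h_2}{12} f^6\right) r^2\, dr$, and $c > 0$ depends only on $m, g_\infty, h_1, h_2$. -/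

import Mathlib

open MeasureTheory

private lemma sq_le_two_exp (r : ℝ) (hr : 0 ≤ r) : r ^ 2 ≤ 2 * Real.exp r := by
  have hE : r / 4 + 1 ≤ Real.exp (r / 4) := Real.add_one_le_exp _
  have h0 : (0:ℝ) ≤ r / 4 + 1 := by linarith
  have h4 : (r / 4 + 1) ^ 4 ≤ Real.exp (r / 4) ^ 4 :=
    pow_le_pow_left₀ h0 hE 4
  have hexp4 : Real.exp (r / 4) ^ 4 = Real.exp r := by
    rw [← Real.exp_nat_mul]; congr 1; push_cast; ring
  rw [hexp4] at h4
  nlinarith [mul_nonneg hr (sq_nonneg (r / 4 - 1)), sq_nonneg r, pow_nonneg hr 4]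

set_option maxHeartbeats 1000000 in
theorem partial_coerciveness (e ginf m h1 h2 : ℝ)
    (he : 0 < e) (hg : 0 < ginf) (hm : 0 < m) (h1p : 0 < h1) (h2p : 0 < h2)
    (hgm : ginf < m) (hcond : h1 ^ 2 < 16 / 3 * h2 * (m ^ 2 - ginf ^ 2)) :
    ∃ c > 0, ∀ f f' g g' : ℝ → ℝ,
      (∀ r > 0, 0 ≤ g r ∧ g r ≤ ginf) →
      IntegrableOn (fun r => (f' r) ^ 2 * r ^ 2) (Set.Ioi 0) →
      IntegrableOn (fun r => (f r) ^ 2 * r ^ 2) (Set.Ioi 0) →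
      IntegrableOn (fun r => (f r) ^ 4 * r ^ 2) (Set.Ioi 0) →
      IntegrableOn (fun r => (f r) ^ 6 * r ^ 2) (Set.Ioi 0) →
      IntegrableOn (fun r => (g' r) ^ 2 * r ^ 2) (Set.Ioi 0) →
      IntegrableOn (fun r => (g r) ^ 2 * (f r) ^ 2 * r ^ 2) (Set.Ioi 0) →
      -- J_f(g) ≤ J_f(ḡ) with ḡ(r) = ginf (1 - e^{-r})
      ((1 / 2) * ∫ r in Set.Ioi (0 : ℝ),
          ((1 / e ^ 2) * (g' r) ^ 2 + (g r) ^ 2 * (f r) ^ 2) * r ^ 2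
        ≤ (1 / 2) * ∫ r in Set.Ioi (0 : ℝ),
          ((1 / e ^ 2) * (ginf * Real.exp (-r)) ^ 2
            + (ginf * (1 - Real.exp (-r))) ^ 2 * (f r) ^ 2) * r ^ 2) →
      -- I(f,g) = K(f) - J_f(g) ≥ ½∫((f')² + c f²) r² dr - ginf²/e²
      (1 / 2) * ∫ r in Set.Ioi (0 : ℝ),
          ((f' r) ^ 2 - (1 / e ^ 2) * (g' r) ^ 2 - (g r) ^ 2 * (f r) ^ 2
            + m ^ 2 * (f r) ^ 2 - h1 / 4 * (f r) ^ 4 + h2 / 12 * (f r) ^ 6) * r ^ 2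
        ≥ (1 / 2) * (∫ r in Set.Ioi (0 : ℝ), ((f' r) ^ 2 + c * (f r) ^ 2) * r ^ 2)
          - ginf ^ 2 / e ^ 2 := by
  refine ⟨(m ^ 2 - ginf ^ 2) - 3 * h1 ^ 2 / (16 * h2), by
    have : 3 * h1 ^ 2 / (16 * h2) < m ^ 2 - ginf ^ 2 := by
      rw [div_lt_iff₀ (by positivity)]; nlinarith
    linarith, ?_⟩
  set c : ℝ := (m ^ 2 - ginf ^ 2) - 3 * h1 ^ 2 / (16 * h2) with hc
  intro f f' g g' hgb hIf' hIf2 hIf4 hIf6 hIg' hIgf hJ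
  have hkey : (m ^ 2 - ginf ^ 2 - c) * (16 * h2) = 3 * h1 ^ 2 := by
    rw [hc]; field_simp; ring
  -- named functions
  set A : ℝ → ℝ := fun r => (f' r) ^ 2 * r ^ 2 + m ^ 2 * ((f r) ^ 2 * r ^ 2)
      - h1 / 4 * ((f r) ^ 4 * r ^ 2) + h2 / 12 * ((f r) ^ 6 * r ^ 2) with hA
  set B : ℝ → ℝ := fun r => 1 / e ^ 2 * ((g' r) ^ 2 * r ^ 2)
      + (g r) ^ 2 * (f r) ^ 2 * r ^ 2 with hB
  set R1 : ℝ → ℝ := fun r => ginf ^ 2 / e ^ 2 * ((Real.exp (-r)) ^ 2 * r ^ 2) with hR1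
  set R2 : ℝ → ℝ := fun r => (ginf * (1 - Real.exp (-r))) ^ 2 * ((f r) ^ 2 * r ^ 2) with hR2
  set C : ℝ → ℝ := fun r => ((f' r) ^ 2 + c * (f r) ^ 2) * r ^ 2
      + ginf ^ 2 * ((f r) ^ 2 * r ^ 2) with hC
  -- integrability
  have hAint : IntegrableOn A (Set.Ioi 0) :=
    ((hIf'.add (hIf2.const_mul (m ^ 2))).sub (hIf4.const_mul (h1 / 4))).add
      (hIf6.const_mul (h2 / 12))
  have hBint : IntegrableOn B (Set.Ioi 0) := (hIg'.const_mul (1 / e ^ 2)).add hIgf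
  have hexpint : IntegrableOn (fun r : ℝ => (Real.exp (-r)) ^ 2 * r ^ 2) (Set.Ioi 0) := by
    have hbd : IntegrableOn (fun r : ℝ => 2 * Real.exp (-r)) (Set.Ioi 0) := by
      have := (exp_neg_integrableOn_Ioi 0 (one_pos)).const_mul (2 : ℝ)
      simpa [IntegrableOn] using this
    refine Integrable.mono' hbd ?_ ?_
    · exact (((Real.continuous_exp.comp continuous_neg).pow 2).mul (continuous_pow 2)).aestronglyMeasurable
    · rw [ae_restrict_iff' measurableSet_Ioi]
      refine Filter.Eventually.of_forall fun r hr => ?_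
      have hr0 : (0:ℝ) ≤ r := le_of_lt hr
      have h1' : r ^ 2 ≤ 2 * Real.exp r := sq_le_two_exp r hr0
      have hE : 0 < Real.exp (-r) := Real.exp_pos _
      rw [Real.norm_eq_abs, abs_of_nonneg (by positivity)]
      have : Real.exp (-r) ^ 2 * r ^ 2 ≤ Real.exp (-r) ^ 2 * (2 * Real.exp r) :=
        mul_le_mul_of_nonneg_left h1' (by positivity)
      calc Real.exp (-r) ^ 2 * r ^ 2 ≤ Real.exp (-r) ^ 2 * (2 * Real.exp r) := this
        _ = 2 * Real.exp (-r) * (Real.exp (-r) * Real.exp r) := by ring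
        _ = 2 * Real.exp (-r) := by rw [← Real.exp_add]; simp
  have hR1int : IntegrableOn R1 (Set.Ioi 0) := hexpint.const_mul _
  have hR2int : IntegrableOn R2 (Set.Ioi 0) := by
    refine Integrable.mono' (hIf2.const_mul (ginf ^ 2)) ?_ ?_
    · exact ((Continuous.mul (continuous_const)
        ((continuous_const.sub (Real.continuous_exp.comp continuous_neg)))).pow 2
        |>.aestronglyMeasurable.mul hIf2.aestronglyMeasurable)
    · rw [ae_restrict_iff' measurableSet_Ioi]
      refine Filter.Eventually.of_forall fun r hr => ?_
      have hE : 0 < Real.exp (-r) := Real.exp_pos _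
      have hE1 : Real.exp (-r) ≤ 1 := Real.exp_le_one_iff.2 (by linarith [Set.mem_Ioi.1 hr])
      rw [Real.norm_eq_abs, abs_of_nonneg (by positivity)]
      have hfr : (0:ℝ) ≤ (f r) ^ 2 * r ^ 2 := by positivity
      have h3 : (1 - Real.exp (-r)) ^ 2 ≤ 1 := by nlinarith
      have h2' : (ginf * (1 - Real.exp (-r))) ^ 2 ≤ ginf ^ 2 := by
        calc (ginf * (1 - Real.exp (-r))) ^ 2 = ginf ^ 2 * (1 - Real.exp (-r)) ^ 2 := by ring
          _ ≤ ginf ^ 2 * 1 := mul_le_mul_of_nonneg_left h3 (sq_nonneg ginf)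
          _ = ginf ^ 2 := mul_one _
      exact mul_le_mul_of_nonneg_right h2' hfr
  have hCint : IntegrableOn C (Set.Ioi 0) := by
    refine Integrable.add ?_ (hIf2.const_mul _)
    have : (fun r : ℝ => ((f' r) ^ 2 + c * (f r) ^ 2) * r ^ 2)
        = fun r => (f' r) ^ 2 * r ^ 2 + c * ((f r) ^ 2 * r ^ 2) := by
      funext r; ring
    rw [this]; exact hIf'.add (hIf2.const_mul c)
  -- rewrite goal LHS integral
  have hgoalLHS : (∫ r in Set.Ioi (0:ℝ),
      ((f' r) ^ 2 - (1 / e ^ 2) * (g' r) ^ 2 - (g r) ^ 2 * (f r) ^ 2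
        + m ^ 2 * (f r) ^ 2 - h1 / 4 * (f r) ^ 4 + h2 / 12 * (f r) ^ 6) * r ^ 2)
      = (∫ r in Set.Ioi (0:ℝ), A r) - ∫ r in Set.Ioi (0:ℝ), B r := by
    rw [← integral_sub hAint hBint]
    refine integral_congr_ae (Filter.Eventually.of_forall fun r => ?_)
    simp only [hA, hB]; ring
  -- hJ rewrite
  have hJ' : (∫ r in Set.Ioi (0:ℝ), B r)
      ≤ (∫ r in Set.Ioi (0:ℝ), R1 r) + ∫ r in Set.Ioi (0:ℝ), R2 r := by
    have e1 : (∫ r in Set.Ioi (0:ℝ),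
        ((1 / e ^ 2) * (g' r) ^ 2 + (g r) ^ 2 * (f r) ^ 2) * r ^ 2)
        = ∫ r in Set.Ioi (0:ℝ), B r := by
      refine integral_congr_ae (Filter.Eventually.of_forall fun r => ?_)
      simp only [hB]; ring
    have e2 : (∫ r in Set.Ioi (0:ℝ),
        ((1 / e ^ 2) * (ginf * Real.exp (-r)) ^ 2
          + (ginf * (1 - Real.exp (-r))) ^ 2 * (f r) ^ 2) * r ^ 2)
        = ∫ r in Set.Ioi (0:ℝ), (R1 r + R2 r) := by
      refine integral_congr_ae (Filter.Eventually.of_forall fun r => ?_)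
      simp only [hR1, hR2]; field_simp
    rw [e1, e2, integral_add hR1int hR2int] at hJ
    linarith
  -- bound ∫ R1
  have hVbound : (∫ r in Set.Ioi (0:ℝ), R1 r) ≤ ginf ^ 2 / e ^ 2 * 2 := by
    have hV : (∫ r in Set.Ioi (0:ℝ), (Real.exp (-r)) ^ 2 * r ^ 2) ≤ 2 := by
      have hbd : IntegrableOn (fun r : ℝ => 2 * Real.exp (-r)) (Set.Ioi 0) := by
        have := (exp_neg_integrableOn_Ioi 0 (one_pos)).const_mul (2 : ℝ)
        simpa [IntegrableOn] using this
      have := setIntegral_mono_on hexpint hbd measurableSet_Ioi (fun r hr => by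
        have hr0 : (0:ℝ) ≤ r := le_of_lt hr
        have h1' : r ^ 2 ≤ 2 * Real.exp r := sq_le_two_exp r hr0
        have hE : 0 < Real.exp (-r) := Real.exp_pos _
        have h2' : Real.exp (-r) ^ 2 * r ^ 2 ≤ Real.exp (-r) ^ 2 * (2 * Real.exp r) :=
          mul_le_mul_of_nonneg_left h1' (by positivity)
        have h3' : Real.exp (-r) ^ 2 * (2 * Real.exp r) = 2 * Real.exp (-r) := by
          have : Real.exp (-r) ^ 2 * Real.exp r = Real.exp (-r) := by
            rw [sq, mul_assoc, ← Real.exp_add]; simp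
          nlinarith [this]
        linarith)
      have h4 : (∫ r in Set.Ioi (0:ℝ), 2 * Real.exp (-r)) = 2 := by
        rw [integral_const_mul, integral_exp_neg_Ioi_zero]; norm_num
      linarith [this, h4.le, h4.ge]
    have := mul_le_mul_of_nonneg_left hV (by positivity : (0:ℝ) ≤ ginf ^ 2 / e ^ 2)
    calc (∫ r in Set.Ioi (0:ℝ), R1 r)
        = ginf ^ 2 / e ^ 2 * ∫ r in Set.Ioi (0:ℝ), (Real.exp (-r)) ^ 2 * r ^ 2 := by
          simp only [hR1]; rw [integral_const_mul]
      _ ≤ ginf ^ 2 / e ^ 2 * 2 := this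
  -- bound ∫ R2
  have hR2bound : (∫ r in Set.Ioi (0:ℝ), R2 r)
      ≤ ginf ^ 2 * ∫ r in Set.Ioi (0:ℝ), (f r) ^ 2 * r ^ 2 := by
    rw [← integral_const_mul]
    refine setIntegral_mono_on hR2int (hIf2.const_mul _) measurableSet_Ioi fun r hr => ?_
    have hE : 0 < Real.exp (-r) := Real.exp_pos _
    have hE1 : Real.exp (-r) ≤ 1 := Real.exp_le_one_iff.2 (by linarith [Set.mem_Ioi.1 hr])
    have hfr : (0:ℝ) ≤ (f r) ^ 2 * r ^ 2 := by positivity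
    have h3 : (1 - Real.exp (-r)) ^ 2 ≤ 1 := by nlinarith
    have h2' : (ginf * (1 - Real.exp (-r))) ^ 2 ≤ ginf ^ 2 := by
      calc (ginf * (1 - Real.exp (-r))) ^ 2 = ginf ^ 2 * (1 - Real.exp (-r)) ^ 2 := by ring
        _ ≤ ginf ^ 2 * 1 := mul_le_mul_of_nonneg_left h3 (sq_nonneg ginf)
        _ = ginf ^ 2 := mul_one _
    exact mul_le_mul_of_nonneg_right h2' hfr
  -- main pointwise coercivity
  have hmain : (∫ r in Set.Ioi (0:ℝ), C r) ≤ ∫ r in Set.Ioi (0:ℝ), A r := by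
    refine setIntegral_mono_on hCint hAint measurableSet_Ioi fun r _ => ?_
    simp only [hC, hA]
    have hkey2 : (f' r) ^ 2 * r ^ 2 + m ^ 2 * ((f r) ^ 2 * r ^ 2)
        - h1 / 4 * ((f r) ^ 4 * r ^ 2) + h2 / 12 * ((f r) ^ 6 * r ^ 2)
        - (((f' r) ^ 2 + c * (f r) ^ 2) * r ^ 2 + ginf ^ 2 * ((f r) ^ 2 * r ^ 2))
        = r ^ 2 * (f r) ^ 2 * (2 * h2 * (f r) ^ 2 - 3 * h1) ^ 2 / (48 * h2) := by
      rw [hc]; field_simp; ring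
    have hpos : 0 ≤ r ^ 2 * (f r) ^ 2 * (2 * h2 * (f r) ^ 2 - 3 * h1) ^ 2 / (48 * h2) := by
      positivity
    linarith
  -- split ∫ C
  have hCsplit : (∫ r in Set.Ioi (0:ℝ), C r)
      = (∫ r in Set.Ioi (0:ℝ), ((f' r) ^ 2 + c * (f r) ^ 2) * r ^ 2)
        + ginf ^ 2 * ∫ r in Set.Ioi (0:ℝ), (f r) ^ 2 * r ^ 2 := by
    have hD : IntegrableOn (fun r : ℝ => ((f' r) ^ 2 + c * (f r) ^ 2) * r ^ 2) (Set.Ioi 0) := by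
      have : (fun r : ℝ => ((f' r) ^ 2 + c * (f r) ^ 2) * r ^ 2)
          = fun r => (f' r) ^ 2 * r ^ 2 + c * ((f r) ^ 2 * r ^ 2) := by funext r; ring
      rw [this]; exact hIf'.add (hIf2.const_mul c)
    simp only [hC]
    rw [integral_add hD (hIf2.const_mul _), integral_const_mul]
  rw [hgoalLHS]
  linarith [hJ', hVbound, hR2bound, hmain, hCsplit]
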